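/- For all θ₁, θ₂, b₁, b₃ ∈ ℝ and every b₂ > 0: P(θ₁, θ₂, b₁, b₂, b₃) ≤ P(θ₁, θ₂, −θ₂, b₂, b₃). Moreover, as a function of b₁ with the other arguments fixed, P(θ₁, θ₂, b₁, b₂, b₃) is strictly increasing for b₁ < −θ₂ and strictly decreasing for b₁ > −θ₂, so b₁ = −θ₂ is its unique maximizer. -/

import Mathlib

open MeasureTheory

/-- The tilted Gaussian integral
`P(θ₁,θ₂,b₁,b₂,b₃) = (1/(2π)) ∬_{t₁ + b₃ ≥ b₂·|t₂ + b₁|} exp(θ₁t₁ + θ₂t₂ − (t₁²+t₂²)/2)`. -/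
noncomputable def Ptilt (θ₁ θ₂ b₁ b₂ b₃ : ℝ) : ℝ :=
  (1 / (2 * Real.pi)) *
    ∫ p : ℝ × ℝ in {p : ℝ × ℝ | b₂ * |p.2 + b₁| ≤ p.1 + b₃},
      Real.exp (θ₁ * p.1 + θ₂ * p.2 - (p.1 ^ 2 + p.2 ^ 2) / 2)

open Set

noncomputable def Efn (x : ℝ) : ℝ := Real.exp (-(x ^ 2) / 2)

lemma Efn_pos (x : ℝ) : 0 < Efn x := Real.exp_pos _

lemma Efn_neg (x : ℝ) : Efn (-x) = Efn x := by simp [Efn]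

lemma Efn_lt {x y : ℝ} (h : x ^ 2 < y ^ 2) : Efn y < Efn x := by
  apply Real.exp_lt_exp.2; linarith

lemma Efn_integrable : Integrable Efn := by
  have h := integrable_exp_neg_mul_sq (by norm_num : (0:ℝ) < 1/2)
  refine h.congr (Filter.Eventually.of_forall fun x => ?_)
  simp [Efn]; ring_nf

lemma Efn_shift_integrable (m : ℝ) : Integrable (fun x => Efn (x - m)) :=
  Efn_integrable.comp_sub_right m

lemma gauss_eq (a : ℝ) :
    (fun x => Real.exp (a * x - x ^ 2 / 2)) =
      fun x => Real.exp (a ^ 2 / 2) * Efn (x - a) := by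
  funext x
  rw [Efn, ← Real.exp_add]
  congr 1
  ring

lemma gauss_integrable (a : ℝ) : Integrable (fun x => Real.exp (a * x - x ^ 2 / 2)) := by
  rw [gauss_eq]
  exact (Efn_shift_integrable a).const_mul _

/-- The inner integral. -/
noncomputable def Kfn (θ₁ b₂ b₃ r : ℝ) : ℝ :=
  ∫ x in Set.Ici (b₂ * r - b₃), Real.exp (θ₁ * x - x ^ 2 / 2)

lemma Kfn_nonneg (θ₁ b₂ b₃ r : ℝ) : 0 ≤ Kfn θ₁ b₂ b₃ r :=
  setIntegral_nonneg measurableSet_Ici fun _ _ => (Real.exp_pos _).le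

lemma Kfn_le (θ₁ b₂ b₃ r : ℝ) :
    Kfn θ₁ b₂ b₃ r ≤ ∫ x, Real.exp (θ₁ * x - x ^ 2 / 2) :=
  setIntegral_le_integral (gauss_integrable θ₁)
    (Filter.Eventually.of_forall fun _ => (Real.exp_pos _).le)

lemma Kfn_antitone (θ₁ b₃ : ℝ) {b₂ : ℝ} (hb₂ : 0 < b₂) : Antitone (Kfn θ₁ b₂ b₃) := by
  intro r r' h
  apply setIntegral_mono_set (gauss_integrable θ₁).integrableOn
    (Filter.Eventually.of_forall fun _ => (Real.exp_pos _).le)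
  apply HasSubset.Subset.eventuallyLE
  exact Ici_subset_Ici.2 (by nlinarith)

lemma Kfn_strictAnti (θ₁ b₃ : ℝ) {b₂ : ℝ} (hb₂ : 0 < b₂) : StrictAnti (Kfn θ₁ b₂ b₃) := by
  intro r r' h
  have ha : b₂ * r - b₃ < b₂ * r' - b₃ := by nlinarith
  set a := b₂ * r - b₃
  set a' := b₂ * r' - b₃
  have hsplit : Kfn θ₁ b₂ b₃ r =
      (∫ x in Set.Ico a a', Real.exp (θ₁ * x - x ^ 2 / 2)) + Kfn θ₁ b₂ b₃ r' := by
    rw [Kfn, Kfn, ← setIntegral_union]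
    · rw [Ico_union_Ici_eq_Ici ha.le]
    · exact (Set.Iio_disjoint_Ici le_rfl).mono_left Set.Ico_subset_Iio_self
    · exact measurableSet_Ici
    · exact (gauss_integrable θ₁).integrableOn
    · exact (gauss_integrable θ₁).integrableOn
  have hpos : 0 < ∫ x in Set.Ico a a', Real.exp (θ₁ * x - x ^ 2 / 2) := by
    rw [setIntegral_pos_iff_support_of_nonneg_ae
      (Filter.Eventually.of_forall fun _ => (Real.exp_pos _).le)
      (gauss_integrable θ₁).integrableOn]
    have : (Function.support fun x => Real.exp (θ₁ * x - x ^ 2 / 2)) = Set.univ := by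
      ext x; simp [Function.support, (Real.exp_pos _).ne']
    rw [this, Set.univ_inter, Real.volume_Ico]
    simp only [ENNReal.ofReal_pos]
    linarith
  linarith

lemma Kfn_measurable (θ₁ b₃ : ℝ) {b₂ : ℝ} (hb₂ : 0 < b₂) : Measurable (Kfn θ₁ b₂ b₃) :=
  (Kfn_antitone θ₁ b₃ hb₂).measurable

/-- Integrability of the main 1-D integrand. -/
lemma EK_integrable (θ₁ b₃ m : ℝ) {b₂ : ℝ} (hb₂ : 0 < b₂) :
    Integrable (fun u => Efn (u - m) * Kfn θ₁ b₂ b₃ |u|) := by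
  have h := (Efn_shift_integrable m).bdd_mul (c := ∫ x, Real.exp (θ₁ * x - x ^ 2 / 2))
    (((Kfn_measurable θ₁ b₃ hb₂).comp measurable_abs).aestronglyMeasurable)
    (Filter.Eventually.of_forall fun u => by
      rw [Function.comp_apply, Real.norm_eq_abs, abs_of_nonneg (Kfn_nonneg _ _ _ _)]
      exact Kfn_le _ _ _ _)
  simpa [mul_comm] using h

/-- The 1-D reduced function. -/
noncomputable def Ffn (θ₁ b₂ b₃ m : ℝ) : ℝ :=
  ∫ u, Efn (u - m) * Kfn θ₁ b₂ b₃ |u|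

lemma Ffn_even (θ₁ b₂ b₃ m : ℝ) : Ffn θ₁ b₂ b₃ (-m) = Ffn θ₁ b₂ b₃ m := by
  rw [Ffn, Ffn, ← integral_neg_eq_self]
  congr 1
  funext u
  rw [abs_neg, ← Efn_neg]
  ring_nf

lemma EK_integrable' (θ₁ b₃ m c : ℝ) {b₂ : ℝ} (hb₂ : 0 < b₂) :
    Integrable (fun u => Efn (u - m) * Kfn θ₁ b₂ b₃ |c + u|) := by
  have hmeas : Measurable (fun u : ℝ => Kfn θ₁ b₂ b₃ |c + u|) :=
    (Kfn_measurable θ₁ b₃ hb₂).comp (measurable_const.add measurable_id).abs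
  have h := (Efn_shift_integrable m).bdd_mul (c := ∫ x, Real.exp (θ₁ * x - x ^ 2 / 2))
    hmeas.aestronglyMeasurable
    (Filter.Eventually.of_forall fun u => by
      rw [Real.norm_eq_abs, abs_of_nonneg (Kfn_nonneg _ _ _ _)]
      exact Kfn_le _ _ _ _)
  simpa [mul_comm] using h

set_option maxHeartbeats 1000000 in
lemma Ffn_strictAnti (θ₁ b₃ : ℝ) {b₂ : ℝ} (hb₂ : 0 < b₂) {m m' : ℝ}
    (hm : 0 ≤ m) (hmm : m < m') : Ffn θ₁ b₂ b₃ m' < Ffn θ₁ b₂ b₃ m := by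
  set K := Kfn θ₁ b₂ b₃ with hK
  set d : ℝ := (m' - m) / 2 with hd_def
  set c : ℝ := (m + m') / 2 with hc_def
  have hd : 0 < d := by rw [hd_def]; linarith
  have hc : 0 < c := by rw [hc_def]; linarith
  have hm_eq : m = c - d := by rw [hc_def, hd_def]; ring
  have hm'_eq : m' = c + d := by rw [hc_def, hd_def]; ring
  -- the symmetrized positive integrand
  set g : ℝ → ℝ := fun s => (Efn (s - d) - Efn (s + d)) * (K |c - s| - K |c + s|) with hg_def
  -- difference as integral of h over ℝ
  set h : ℝ → ℝ := fun s => (Efn (s + d) - Efn (s - d)) * K |c + s| with hh_def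
  have hEint : ∀ a : ℝ, Integrable (fun s : ℝ => Efn (s - a) * K |c + s|) :=
    fun a => EK_integrable' θ₁ b₃ a c hb₂
  have hhint : Integrable h := by
    have := (hEint (-d)).sub (hEint d)
    refine this.congr (Filter.Eventually.of_forall fun s => ?_)
    rw [hh_def]
    simp only [Pi.sub_apply, sub_neg_eq_add]
    ring
  have hdiff : Ffn θ₁ b₂ b₃ m - Ffn θ₁ b₂ b₃ m' = ∫ s, h s := by
    rw [Ffn, Ffn, ← integral_sub (EK_integrable θ₁ b₃ m hb₂) (EK_integrable θ₁ b₃ m' hb₂)]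
    rw [← integral_add_right_eq_self
      (fun u => Efn (u - m) * Kfn θ₁ b₂ b₃ |u| - Efn (u - m') * Kfn θ₁ b₂ b₃ |u|) c]
    congr 1
    funext s
    have e1 : s + c - m = s + d := by rw [hm_eq]; ring
    have e2 : s + c - m' = s - d := by rw [hm'_eq]; ring
    have e3 : s + c = c + s := by ring
    rw [e1, e2, e3, hh_def, ← hK]
    ring
  -- fold into integral over Ioi 0
  have hsplit : ∫ s, h s = ∫ s in Ioi (0:ℝ), (h (-s) + h s) := by
    have h1 : (∫ s in Iic (0:ℝ), h s) + ∫ s in Ioi (0:ℝ), h s = ∫ s, h s :=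
      intervalIntegral.integral_Iic_add_Ioi hhint.integrableOn hhint.integrableOn
    have h2 : (∫ s in Ioi (0:ℝ), h (-s)) = ∫ s in Iic (0:ℝ), h s := by
      simpa using integral_comp_neg_Ioi 0 h
    rw [← h1, ← h2,
      ← integral_add hhint.comp_neg.integrableOn hhint.integrableOn]
  have hsum : ∀ s : ℝ, h (-s) + h s = g s := by
    intro s
    rw [hh_def, hg_def]
    simp only []
    have e1 : -s + d = -(s - d) := by ring
    have e2 : -s - d = -(s + d) := by ring
    have e3 : c + -s = c - s := by ring
    rw [e1, e2, e3, Efn_neg, Efn_neg]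
    ring
  have hgpos : ∀ s ∈ Ioi (0:ℝ), 0 < g s := by
    intro s hs
    rw [Set.mem_Ioi] at hs
    rw [hg_def]
    apply mul_pos
    · rw [sub_pos]
      apply Efn_lt
      nlinarith
    · rw [sub_pos]
      apply Kfn_strictAnti θ₁ b₃ hb₂
      rw [abs_of_pos (by linarith : (0:ℝ) < c + s)]
      apply abs_lt.2
      constructor <;> linarith
  have hgint : IntegrableOn g (Ioi (0:ℝ)) := by
    have : Integrable (fun s => h (-s) + h s) := hhint.comp_neg.add hhint
    exact (this.congr (Filter.Eventually.of_forall hsum)).integrableOn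
  have hpos : 0 < ∫ s in Ioi (0:ℝ), g s := by
    rw [setIntegral_pos_iff_support_of_nonneg_ae _ hgint]
    · have hsub : Ioi (0:ℝ) ⊆ Function.support g ∩ Ioi 0 :=
        fun s hs => ⟨(hgpos s hs).ne', hs⟩
      refine lt_of_lt_of_le (b := volume (Ioi (0:ℝ))) ?_ (measure_mono hsub)
      simp [Real.volume_Ioi]
    · rw [Filter.EventuallyLE, ae_restrict_iff' measurableSet_Ioi]
      exact Filter.Eventually.of_forall fun s hs => (hgpos s hs).le
  have : 0 < Ffn θ₁ b₂ b₃ m - Ffn θ₁ b₂ b₃ m' := by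
    rw [hdiff, hsplit]
    have : (∫ s in Ioi (0:ℝ), (h (-s) + h s)) = ∫ s in Ioi (0:ℝ), g s := by
      congr 1
      funext s
      exact hsum s
    rw [this]
    exact hpos
  linarith

lemma Ptilt_eq (θ₁ θ₂ b₁ b₂ b₃ : ℝ) :
    Ptilt θ₁ θ₂ b₁ b₂ b₃ =
      (1 / (2 * Real.pi)) * (Real.exp (θ₂ ^ 2 / 2) * Ffn θ₁ b₂ b₃ (b₁ + θ₂)) := by
  set S : Set (ℝ × ℝ) := {p : ℝ × ℝ | b₂ * |p.2 + b₁| ≤ p.1 + b₃} with hS_def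
  have hS : MeasurableSet S := by
    apply measurableSet_le
    · exact measurable_const.mul ((measurable_snd.add_const b₁).abs)
    · exact measurable_fst.add_const b₃
  set G : ℝ × ℝ → ℝ := fun p : ℝ × ℝ =>
      Real.exp (θ₁ * p.1 - p.1 ^ 2 / 2) * Real.exp (θ₂ * p.2 - p.2 ^ 2 / 2) with hG_def
  have hG_eq : ∀ p : ℝ × ℝ,
      Real.exp (θ₁ * p.1 + θ₂ * p.2 - (p.1 ^ 2 + p.2 ^ 2) / 2) = G p := by
    intro p
    show Real.exp (θ₁ * p.1 + θ₂ * p.2 - (p.1 ^ 2 + p.2 ^ 2) / 2) =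
      Real.exp (θ₁ * p.1 - p.1 ^ 2 / 2) * Real.exp (θ₂ * p.2 - p.2 ^ 2 / 2)
    rw [← Real.exp_add]
    congr 1
    ring
  have hGint : Integrable G := by
    rw [hG_def, Measure.volume_eq_prod]
    exact (gauss_integrable θ₁).mul_prod (gauss_integrable θ₂)
  have step0 : (∫ p in S, Real.exp (θ₁ * p.1 + θ₂ * p.2 - (p.1 ^ 2 + p.2 ^ 2) / 2))
      = ∫ p in S, G p := by
    simp only [hG_eq]
  have step1 : (∫ p in S, G p) = ∫ y, ∫ x, S.indicator G (x, y) := by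
    rw [← integral_indicator hS, Measure.volume_eq_prod,
      integral_prod_symm _ (by rw [← Measure.volume_eq_prod]; exact hGint.indicator hS :
        Integrable (S.indicator G) _)]
  have step2 : ∀ y : ℝ, (∫ x, S.indicator G (x, y)) =
      Real.exp (θ₂ * y - y ^ 2 / 2) * Kfn θ₁ b₂ b₃ |y + b₁| := by
    intro y
    have : (fun x => S.indicator G (x, y)) = fun x =>
        (Set.Ici (b₂ * |y + b₁| - b₃)).indicator
          (fun t => Real.exp (θ₁ * t - t ^ 2 / 2)) x * Real.exp (θ₂ * y - y ^ 2 / 2) := by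
      funext x
      by_cases hxy : b₂ * |y + b₁| - b₃ ≤ x
      · rw [Set.indicator_of_mem (by simpa [hS_def, Set.mem_setOf_eq] using
          (by linarith : b₂ * |y + b₁| ≤ x + b₃)),
          Set.indicator_of_mem (Set.mem_Ici.2 hxy), hG_def]
      · rw [Set.indicator_of_notMem (by
            simp only [hS_def, Set.mem_setOf_eq]
            intro hc
            exact hxy (by linarith)),
          Set.indicator_of_notMem (fun hc => hxy (Set.mem_Ici.1 hc)), zero_mul]
    rw [this, integral_mul_const, integral_indicator measurableSet_Ici, ← Kfn]
    ring
  have step3 : (∫ y, Real.exp (θ₂ * y - y ^ 2 / 2) * Kfn θ₁ b₂ b₃ |y + b₁|) =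
      Real.exp (θ₂ ^ 2 / 2) * Ffn θ₁ b₂ b₃ (b₁ + θ₂) := by
    have e1 : (fun y => Real.exp (θ₂ * y - y ^ 2 / 2) * Kfn θ₁ b₂ b₃ |y + b₁|) =
        fun y => Real.exp (θ₂ ^ 2 / 2) * (Efn (y - θ₂) * Kfn θ₁ b₂ b₃ |y + b₁|) := by
      funext y
      rw [show Real.exp (θ₂ * y - y ^ 2 / 2) = Real.exp (θ₂ ^ 2 / 2) * Efn (y - θ₂) from
        congrFun (gauss_eq θ₂) y]
      ring
    rw [e1, integral_const_mul]
    congr 1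
    rw [Ffn, ← integral_add_right_eq_self
      (fun u => Efn (u - (b₁ + θ₂)) * Kfn θ₁ b₂ b₃ |u|) b₁]
    congr 1
    funext y
    have e2 : y + b₁ - (b₁ + θ₂) = y - θ₂ := by ring
    rw [e2]
  rw [Ptilt]
  congr 1
  rw [step0, step1]
  rw [show (fun y => ∫ x, S.indicator G (x, y)) = fun y =>
      Real.exp (θ₂ * y - y ^ 2 / 2) * Kfn θ₁ b₂ b₃ |y + b₁| from funext step2]
  exact step3

theorem stmt13 (θ₁ θ₂ b₃ b₂ : ℝ) (hb₂ : 0 < b₂) :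
    (∀ b₁ : ℝ, Ptilt θ₁ θ₂ b₁ b₂ b₃ ≤ Ptilt θ₁ θ₂ (-θ₂) b₂ b₃) ∧
    StrictMonoOn (fun b₁ => Ptilt θ₁ θ₂ b₁ b₂ b₃) (Set.Iic (-θ₂)) ∧
    StrictAntiOn (fun b₁ => Ptilt θ₁ θ₂ b₁ b₂ b₃) (Set.Ici (-θ₂)) ∧
    (∀ b₁ : ℝ, b₁ ≠ -θ₂ → Ptilt θ₁ θ₂ b₁ b₂ b₃ < Ptilt θ₁ θ₂ (-θ₂) b₂ b₃) := by
  have habs : ∀ m : ℝ, Ffn θ₁ b₂ b₃ m = Ffn θ₁ b₂ b₃ |m| := by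
    intro m
    rcases le_or_gt 0 m with h | h
    · rw [abs_of_nonneg h]
    · rw [abs_of_neg h, Ffn_even]
  have key : ∀ {x y : ℝ}, |x| < |y| → Ffn θ₁ b₂ b₃ y < Ffn θ₁ b₂ b₃ x := by
    intro x y hxy
    rw [habs x, habs y]
    exact Ffn_strictAnti θ₁ b₃ hb₂ (abs_nonneg x) hxy
  have hlt : ∀ a b : ℝ, |a + θ₂| < |b + θ₂| →
      Ptilt θ₁ θ₂ b b₂ b₃ < Ptilt θ₁ θ₂ a b₂ b₃ := by
    intro a b hab
    rw [Ptilt_eq, Ptilt_eq]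
    have hF := key hab
    have hc : 0 < 1 / (2 * Real.pi) := by positivity
    have he : (0:ℝ) < Real.exp (θ₂ ^ 2 / 2) := Real.exp_pos _
    exact mul_lt_mul_of_pos_left (mul_lt_mul_of_pos_left hF he) hc
  have hstrict : ∀ b₁ : ℝ, b₁ ≠ -θ₂ →
      Ptilt θ₁ θ₂ b₁ b₂ b₃ < Ptilt θ₁ θ₂ (-θ₂) b₂ b₃ := by
    intro b₁ hb₁
    apply hlt
    rw [neg_add_cancel, abs_zero, abs_pos]
    intro hc
    exact hb₁ (by linarith)
  refine ⟨?_, ?_, ?_, hstrict⟩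
  · intro b₁
    rcases eq_or_ne b₁ (-θ₂) with h | h
    · rw [h]
    · exact (hstrict b₁ h).le
  · intro x hx y hy hxy
    simp only [Set.mem_Iic] at hx hy
    apply hlt
    rw [abs_of_nonpos (by linarith : y + θ₂ ≤ 0), abs_of_nonpos (by linarith : x + θ₂ ≤ 0)]
    linarith
  · intro x hx y hy hxy
    simp only [Set.mem_Ici] at hx hy
    apply hlt
    rw [abs_of_nonneg (by linarith : 0 ≤ x + θ₂), abs_of_nonneg (by linarith : 0 ≤ y + θ₂)]
    linarith
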